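/- Let G_∞=(V_∞,E_∞) be an infinite, locally finite, bounded-degree connected graph with 0-1 KCSM constraints {c_x} of finite range r, fix a vertex v∈V_∞ and let B_n be the ball of radius n around v. For each n let gap_n^max be the spectral gap of the chain on {0,1}^{B_n} with constraints c^max_{x,B_n}(ω) := c_x(ω·0_{V_∞∖B_n}) (all spins outside B_n frozen to the good value 0), and let gap(L) := inf of D(f)/Var_μ(f) over nonconstant functions f on {0,1}^{V_∞} depending on finitely many coordinates, with D(f)=Σ_{x∈V_∞} μ(c_x·Var_x f). Then gap(L) ≥ inf_n gap_n^max; in particular, if inf_n gap_n^max > 0 then gap(L) > 0. -/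
import Mathlib


open scoped Classical BigOperators

noncomputable section

/-- Indicator of a proposition. -/
def ind (P : Prop) : ℝ := if P then 1 else 0

variable {ι : Type*} [DecidableEq ι]

/-- Extend a configuration defined on the finite set `S` by `true` (occupied) elsewhere. -/
def extCfg (S : Finset ι) (σ : {x // x ∈ S} → Bool) : ι → Bool :=
  fun x => if h : x ∈ S then σ ⟨x, h⟩ else true

/-- Product Bernoulli weight of a local configuration: each site is empty (`false`)
with probability `q` and occupied (`true`) with probability `1 - q`. -/
def cylWeight (q : ℝ) (S : Finset ι) (σ : {x // x ∈ S} → Bool) : ℝ :=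
  ∏ x : {x // x ∈ S}, (if σ x then 1 - q else q)

/-- Expectation (under the Bernoulli(1-q) product measure) of a function depending
only on the coordinates in `S`. -/
def cylExp (q : ℝ) (S : Finset ι) (f : (ι → Bool) → ℝ) : ℝ :=
  ∑ σ : {x // x ∈ S} → Bool, cylWeight q S σ * f (extCfg S σ)

/-- `f` depends only on the coordinates in `S`. -/
def DependsOnCoords (f : (ι → Bool) → ℝ) (S : Finset ι) : Prop :=
  ∀ ω ω' : ι → Bool, (∀ x ∈ S, ω x = ω' x) → f ω = f ω'

/-- The local variance `Var_x f (ω) = p q (f(ω^{x←1}) - f(ω^{x←0}))²`, `p = 1 - q`. -/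
def varAt (q : ℝ) (f : (ι → Bool) → ℝ) (x : ι) (ω : ι → Bool) : ℝ :=
  (1 - q) * q * (f (Function.update ω x true) - f (Function.update ω x false)) ^ 2

/-- Variance of a function depending only on the coordinates in `S`. -/
def cylVar (q : ℝ) (S : Finset ι) (f : (ι → Bool) → ℝ) : ℝ :=
  cylExp q S (fun ω => (f ω) ^ 2) - (cylExp q S f) ^ 2

/-- Dirichlet form `D(f) = Σ_x μ(c_x · Var_x f)` of a function depending only on the
coordinates in `S`, for constraints `c` such that `c x` depends only on the coordinates
in `supp x`. -/
def dirichlet (q : ℝ) (c : ι → (ι → Bool) → Prop) (supp : ι → Finset ι)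
    (S : Finset ι) (f : (ι → Bool) → ℝ) : ℝ :=
  ∑' x : ι, cylExp q (insert x (S ∪ supp x)) (fun ω => ind (c x ω) * varAt q f x ω)

/-- The spectral gap of the kinetically constrained model with constraints `c`
(the constraint at `x` depending only on the coordinates in `supp x`):
the infimum of `D(f)/Var(f)` over nonconstant functions depending on finitely many
coordinates. -/
def kcmGap (q : ℝ) (c : ι → (ι → Bool) → Prop) (supp : ι → Finset ι) : ℝ :=
  sInf { γ : ℝ | ∃ (f : (ι → Bool) → ℝ) (S : Finset ι),
    DependsOnCoords f S ∧ (∃ ω ω', f ω ≠ f ω') ∧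
    γ = dirichlet q c supp S f / cylVar q S f }

/-- The spectral gap of the East model on `ℤ` at parameter `q`. -/
def eastGap (q : ℝ) : ℝ :=
  kcmGap q (fun (x : ℤ) ω => ω (x + 1) = false) (fun x => {x + 1})

end

noncomputable section
open scoped Classical

variable {ι : Type*} [DecidableEq ι]

/-- Constraint in the region `Λ` with maximal boundary condition: all spins outside `Λ`
are frozen to the good value `0` (`false`). -/
def frozenC (c : ι → (ι → Bool) → Prop) (Λ : Set ι) (x : ι) (ω : ι → Bool) : Prop :=
  c x (fun y => if y ∈ Λ then ω y else false)

/-- Dirichlet form of the chain in the region `Λ` with maximal boundary condition. -/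
def dirichletOn (q : ℝ) (c : ι → (ι → Bool) → Prop) (supp : ι → Finset ι) (Λ : Set ι)
    (S : Finset ι) (f : (ι → Bool) → ℝ) : ℝ :=
  ∑' x : Λ, cylExp q (insert (x : ι) (S ∪ supp (x : ι)))
    (fun ω => ind (frozenC c Λ (x : ι) ω) * varAt q f (x : ι) ω)

/-- Spectral gap of the chain in the region `Λ` with maximal boundary condition
(spins outside `Λ` frozen to `0`). -/
def gapOn (q : ℝ) (c : ι → (ι → Bool) → Prop) (supp : ι → Finset ι) (Λ : Set ι) : ℝ :=
  sInf { γ : ℝ | ∃ (f : (ι → Bool) → ℝ) (S : Finset ι), ↑S ⊆ Λ ∧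
    DependsOnCoords f S ∧ (∃ ω ω', f ω ≠ f ω') ∧
    γ = dirichletOn q c supp Λ S f / cylVar q S f }

end

section auxLemmas
open scoped Classical
variable {ι : Type*} [DecidableEq ι]

lemma cylWeight_nonneg {q : ℝ} (hq : q ∈ Set.Ioo (0:ℝ) 1) (S : Finset ι)
    (σ : {x // x ∈ S} → Bool) : 0 ≤ cylWeight q S σ := by
  refine Finset.prod_nonneg fun x _ => ?_
  split <;> [linarith [hq.2]; exact le_of_lt hq.1]

lemma sum_cylWeight (q : ℝ) (S : Finset ι) :
    ∑ σ : {x // x ∈ S} → Bool, cylWeight q S σ = 1 := by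
  unfold cylWeight
  rw [← Fintype.prod_sum (fun (_ : {x // x ∈ S}) (b : Bool) => if b then 1 - q else q)]
  simp

lemma ind_nonneg (P : Prop) : 0 ≤ ind P := by
  unfold ind; split <;> norm_num

lemma ind_congr {P Q : Prop} (h : P ↔ Q) : ind P = ind Q := by
  unfold ind
  exact if_congr h rfl rfl

lemma varAt_nonneg {q : ℝ} (hq : q ∈ Set.Ioo (0:ℝ) 1) (f : (ι → Bool) → ℝ) (x : ι)
    (ω : ι → Bool) : 0 ≤ varAt q f x ω :=
  mul_nonneg (mul_nonneg (by linarith [hq.2]) (le_of_lt hq.1)) (sq_nonneg _)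

lemma cylExp_nonneg {q : ℝ} (hq : q ∈ Set.Ioo (0:ℝ) 1) (S : Finset ι)
    {f : (ι → Bool) → ℝ} (hf : ∀ ω, 0 ≤ f ω) : 0 ≤ cylExp q S f :=
  Finset.sum_nonneg fun σ _ => mul_nonneg (cylWeight_nonneg hq S σ) (hf _)

lemma cylExp_congr {q : ℝ} (S : Finset ι) {f g : (ι → Bool) → ℝ}
    (h : ∀ ω, f ω = g ω) : cylExp q S f = cylExp q S g := by
  unfold cylExp; simp only [h]

lemma varAt_eq_zero {f : (ι → Bool) → ℝ} {S : Finset ι} (hf : DependsOnCoords f S)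
    {x : ι} (hx : x ∉ S) (q : ℝ) (ω : ι → Bool) : varAt q f x ω = 0 := by
  have hb : ∀ b : Bool, f (Function.update ω x b) = f ω := fun b =>
    hf _ _ fun y hy => Function.update_of_ne (by rintro rfl; exact hx hy) _ _
  unfold varAt
  rw [hb true, hb false, sub_self]
  ring

lemma cylExp_ind_varAt_zero {q : ℝ} (T : Finset ι) (P : (ι → Bool) → Prop)
    {f : (ι → Bool) → ℝ} {S : Finset ι} (hf : DependsOnCoords f S) {x : ι}
    (hx : x ∉ S) : cylExp q T (fun ω => ind (P ω) * varAt q f x ω) = 0 := by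
  rw [cylExp_congr T (g := fun _ => (0:ℝ))
    (fun ω => by rw [varAt_eq_zero hf hx, mul_zero])]
  unfold cylExp
  simp

lemma cylVar_nonneg {q : ℝ} (hq : q ∈ Set.Ioo (0:ℝ) 1) (S : Finset ι)
    (f : (ι → Bool) → ℝ) : 0 ≤ cylVar q S f := by
  set m := cylExp q S f with hm
  have key : cylVar q S f = ∑ σ : {x // x ∈ S} → Bool,
      cylWeight q S σ * (f (extCfg S σ) - m) ^ 2 := by
    have expand : ∑ σ : {x // x ∈ S} → Bool, cylWeight q S σ * (f (extCfg S σ) - m) ^ 2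
        = (∑ σ : {x // x ∈ S} → Bool, cylWeight q S σ * (f (extCfg S σ)) ^ 2)
          - 2 * m * (∑ σ : {x // x ∈ S} → Bool, cylWeight q S σ * f (extCfg S σ))
          + m ^ 2 * (∑ σ : {x // x ∈ S} → Bool, cylWeight q S σ) := by
    -- expand the square and distribute
      rw [Finset.mul_sum, Finset.mul_sum, ← Finset.sum_sub_distrib, ← Finset.sum_add_distrib]
      refine Finset.sum_congr rfl fun σ _ => by ring
    rw [expand, sum_cylWeight]
    unfold cylVar
    rw [← hm]
    have : (∑ σ : {x // x ∈ S} → Bool, cylWeight q S σ * f (extCfg S σ)) = m := rfl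
    rw [this]
    have : (∑ σ : {x // x ∈ S} → Bool, cylWeight q S σ * (f (extCfg S σ)) ^ 2)
        = cylExp q S fun ω => (f ω) ^ 2 := rfl
    rw [this]
    ring
  rw [key]
  exact Finset.sum_nonneg fun σ _ =>
    mul_nonneg (cylWeight_nonneg hq S σ) (sq_nonneg _)

lemma dirichlet_nonneg {q : ℝ} (hq : q ∈ Set.Ioo (0:ℝ) 1)
    (c : ι → (ι → Bool) → Prop) (supp : ι → Finset ι) (S : Finset ι)
    (f : (ι → Bool) → ℝ) : 0 ≤ dirichlet q c supp S f :=
  tsum_nonneg fun x => cylExp_nonneg hq _ fun ω =>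
    mul_nonneg (ind_nonneg _) (varAt_nonneg hq f x ω)

lemma dirichletOn_nonneg {q : ℝ} (hq : q ∈ Set.Ioo (0:ℝ) 1)
    (c : ι → (ι → Bool) → Prop) (supp : ι → Finset ι) (Λ : Set ι) (S : Finset ι)
    (f : (ι → Bool) → ℝ) : 0 ≤ dirichletOn q c supp Λ S f :=
  tsum_nonneg fun x => cylExp_nonneg hq _ fun ω =>
    mul_nonneg (ind_nonneg _) (varAt_nonneg hq f x ω)

lemma gapOn_nonneg {q : ℝ} (hq : q ∈ Set.Ioo (0:ℝ) 1)
    (c : ι → (ι → Bool) → Prop) (supp : ι → Finset ι) (Λ : Set ι) :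
    0 ≤ gapOn q c supp Λ := by
  refine Real.sInf_nonneg fun γ hγ => ?_
  obtain ⟨f, S, -, -, -, rfl⟩ := hγ
  exact div_nonneg (dirichletOn_nonneg hq c supp Λ S f) (cylVar_nonneg hq S f)

end auxLemmas

open scoped Classical in
/-- For a 0-1 KCSM on an infinite, locally finite, bounded-degree
connected graph with finite-range constraints, the infinite-volume spectral gap is at
least the infimum over `n` of the finite-volume gaps on the balls `B_n` with maximal
(all `0`) boundary conditions; in particular, if the latter infimum is positive then so
is the infinite-volume gap. -/

theorem gap_ge_iInf_ball_gaps {V : Type*} [DecidableEq V] [Infinite V]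
    (G : SimpleGraph V) [G.LocallyFinite] (hconn : G.Connected)
    (D : ℕ) (hdeg : ∀ x, G.degree x ≤ D)
    (C : V → Finset (Finset V))
    (hp1 : ∀ x, ∀ A ∈ C x, x ∉ A)
    (r : ℕ) (hp2 : ∀ x, ∀ A ∈ C x, ∀ y ∈ A, G.dist x y ≤ r)
    (v : V) (q : ℝ) (hq : q ∈ Set.Ioo (0 : ℝ) 1) :
    (⨅ n : ℕ, gapOn q (fun x ω => ∃ A ∈ C x, ∀ y ∈ A, ω y = false)
        (fun x => (C x).sup id) {y : V | G.dist v y ≤ n}) ≤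
      kcmGap q (fun x ω => ∃ A ∈ C x, ∀ y ∈ A, ω y = false) (fun x => (C x).sup id) ∧
    (0 < (⨅ n : ℕ, gapOn q (fun x ω => ∃ A ∈ C x, ∀ y ∈ A, ω y = false)
        (fun x => (C x).sup id) {y : V | G.dist v y ≤ n}) →
      0 < kcmGap q (fun x ω => ∃ A ∈ C x, ∀ y ∈ A, ω y = false) (fun x => (C x).sup id)) := by
  classical
  set c : V → (V → Bool) → Prop := fun x ω => ∃ A ∈ C x, ∀ y ∈ A, ω y = false with hc
  set supp : V → Finset V := fun x => (C x).sup id with hsupp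
  have main : (⨅ n : ℕ, gapOn q c supp {y : V | G.dist v y ≤ n}) ≤ kcmGap q c supp := by
    -- the set defining kcmGap is nonempty
    have hne : { γ : ℝ | ∃ (f : (V → Bool) → ℝ) (S : Finset V),
        DependsOnCoords f S ∧ (∃ ω ω', f ω ≠ f ω') ∧
        γ = dirichlet q c supp S f / cylVar q S f }.Nonempty := by
      refine ⟨_, fun ω => if ω v then (1:ℝ) else 0, {v}, ?_, ?_, rfl⟩
      · intro ω ω' h
        simp [h v (Finset.mem_singleton_self v)]
      · exact ⟨fun _ => true, fun _ => false, by norm_num⟩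
    refine le_csInf hne ?_
    rintro γ ⟨f, S, hdep, hnc, rfl⟩
    -- choose n large enough
    set N : ℕ := S.sup (fun x => G.dist v x) with hN
    set n : ℕ := N + r with hn
    set Λ : Set V := {y : V | G.dist v y ≤ n} with hΛ
    have hSΛ : ↑S ⊆ Λ := by
      intro x hx
      simp only [hΛ, Set.mem_setOf_eq]
      calc G.dist v x ≤ N := Finset.le_sup (f := fun x => G.dist v x) (by exact_mod_cast hx)
        _ ≤ n := by omega
    -- for x ∈ S, the frozen constraint agrees with the original one
    have hfroz : ∀ x ∈ S, ∀ ω : V → Bool, frozenC c Λ x ω ↔ c x ω := by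
      intro x hx ω
      have hyΛ : ∀ A ∈ C x, ∀ y ∈ A, y ∈ Λ := by
        intro A hA y hy
        simp only [hΛ, Set.mem_setOf_eq]
        calc G.dist v y ≤ G.dist v x + G.dist x y := hconn.dist_triangle
          _ ≤ N + r := add_le_add (Finset.le_sup (f := fun x => G.dist v x) hx)
              (hp2 x A hA y hy)
          _ = n := rfl
      constructor
      · rintro ⟨A, hA, hall⟩
        refine ⟨A, hA, fun y hy => ?_⟩
        simpa only [if_pos (hyΛ A hA y hy)] using hall y hy
      · rintro ⟨A, hA, hall⟩
        refine ⟨A, hA, fun y hy => ?_⟩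
        by_cases h : y ∈ Λ
        · simp [h, hall y hy]
        · simp [h]
    -- the two Dirichlet forms coincide
    have hD : dirichletOn q c supp Λ S f = dirichlet q c supp S f := by
      unfold dirichletOn dirichlet
      rw [tsum_subtype Λ (fun x : V => cylExp q (insert x (S ∪ supp x))
        (fun ω => ind (frozenC c Λ x ω) * varAt q f x ω))]
      congr 1
      funext x
      by_cases hxΛ : x ∈ Λ
      · rw [Set.indicator_of_mem hxΛ]
        by_cases hxS : x ∈ S
        · refine cylExp_congr _ fun ω => ?_
            
          rw [ind_congr (hfroz x hxS ω)]
        · rw [cylExp_ind_varAt_zero _ _ hdep hxS, cylExp_ind_varAt_zero _ _ hdep hxS]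
      · rw [Set.indicator_of_notMem hxΛ]
        have hxS : x ∉ S := fun h => hxΛ (hSΛ h)
        rw [cylExp_ind_varAt_zero _ _ hdep hxS]
    -- conclude
    have h1 : gapOn q c supp Λ ≤ dirichlet q c supp S f / cylVar q S f := by
      rw [← hD]
      refine csInf_le ⟨0, ?_⟩ ⟨f, S, hSΛ, hdep, hnc, rfl⟩
      rintro γ ⟨g, T, -, -, -, rfl⟩
      exact div_nonneg (dirichletOn_nonneg hq c supp Λ T g) (cylVar_nonneg hq T g)
    refine le_trans ?_ h1
    exact ciInf_le ⟨0, by rintro γ ⟨m, rfl⟩; exact gapOn_nonneg hq c supp _⟩ n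
  exact ⟨main, fun h => lt_of_lt_of_le h main⟩
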